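/- For any integer n > 1 and prime p, if the p-adic valuation of gcd_{0<k<n} C(n,k) is positive, then n is a power of p, and in that case the valuation equals exactly 1. -/

import Mathlib

private lemma val_choose_pow_pow (p i : ℕ) (hp : p.Prime) (hi : 0 < i) :
    padicValNat p (Nat.choose (p ^ i) (p ^ (i - 1))) = 1 := by
  haveI : Fact p.Prime := ⟨hp⟩
  have hlt : p ^ (i - 1) < p ^ i := Nat.pow_lt_pow_right hp.one_lt (by omega)
  have hk0 : p ^ (i - 1) ≠ 0 := (Nat.pow_pos hp.pos).ne'
  have h := Nat.Prime.emultiplicity_choose_prime_pow hp hlt.le hk0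
  have hm : multiplicity p (p ^ (i - 1)) = i - 1 :=
    multiplicity_pow_self_of_prime hp.prime (i - 1)
  rw [hm] at h
  have hv := padicValNat_eq_emultiplicity (p := p) (Nat.choose_pos hlt.le).ne'
  rw [h] at hv
  have : padicValNat p (Nat.choose (p ^ i) (p ^ (i - 1))) = i - (i - 1) := by
    exact_mod_cast hv
  omega

private lemma not_dvd_choose (n p : ℕ) (hn : 1 < n) (hp : p.Prime)
    (h : ∀ i : ℕ, 0 < i → n ≠ p ^ i) :
    ¬ p ∣ Nat.choose n (p ^ padicValNat p n) := by
  haveI : Fact p.Prime := ⟨hp⟩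
  set a := padicValNat p n with ha
  have hn0 : n ≠ 0 := by omega
  have hdvd : p ^ a ∣ n := pow_padicValNat_dvd
  obtain ⟨m, hm⟩ := hdvd
  have hpm : ¬ p ∣ m := by
    intro hpm
    have : p ^ (a + 1) ∣ n := by
      rw [hm, pow_succ]
      exact Nat.mul_dvd_mul_left _ hpm
    exact (pow_succ_padicValNat_not_dvd hn0) this
  have hm0 : m ≠ 0 := by rintro rfl; simp at hm; omega
  have hm1 : m ≠ 1 := by
    rintro rfl
    rw [mul_one] at hm
    rcases Nat.eq_zero_or_pos a with h0 | h0
    · rw [h0, pow_zero] at hm; omega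
    · exact h a h0 hm
  have hm2 : 2 ≤ m := by omega
  have hklt : p ^ a < n := by
    rw [hm]
    exact lt_mul_of_one_lt_right (Nat.pow_pos hp.pos) (by omega)
  intro hdvdC
  have hCpos : 0 < Nat.choose n (p ^ a) := Nat.choose_pos hklt.le
  have h1 : 1 ≤ padicValNat p (Nat.choose n (p ^ a)) :=
    one_le_padicValNat_of_dvd hCpos.ne' hdvdC
  have hval : padicValNat p (Nat.choose n (p ^ a)) = 0 := by
    rw [padicValNat_choose (hkn := hklt.le) (hnb := Nat.lt_succ_self (Nat.log p n))]
    rw [Finset.card_eq_zero, Finset.filter_eq_empty_iff]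
    intro i hi
    simp only [Finset.mem_Ico] at hi
    rcases le_or_gt i a with hia | hia
    · -- i ≤ a : both residues are 0
      have h1 : p ^ i ∣ p ^ a := pow_dvd_pow p hia
      have h2 : p ^ i ∣ n - p ^ a := by
        have : p ^ i ∣ n := h1.trans (hm ▸ Dvd.intro m rfl)
        exact Nat.dvd_sub this h1
      have hz1 : p ^ a % p ^ i = 0 := Nat.eq_zero_of_dvd_of_lt (Nat.dvd_mod_iff (dvd_refl _) |>.2 h1) (Nat.mod_lt _ (Nat.pow_pos (n := i) hp.pos))
      have hz2 : (n - p ^ a) % p ^ i = 0 := Nat.eq_zero_of_dvd_of_lt (Nat.dvd_mod_iff (dvd_refl _) |>.2 h2) (Nat.mod_lt _ (Nat.pow_pos (n := i) hp.pos))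
      rw [hz1, hz2]
      push_neg
      simpa using Nat.pow_pos (n := i) hp.pos
    · -- i > a
      set j := i - a with hj
      have hj1 : 1 ≤ j := by omega
      have hij : i = a + j := by omega
      have e1 : p ^ a % p ^ i = p ^ a :=
        Nat.mod_eq_of_lt (Nat.pow_lt_pow_right hp.one_lt (by omega))
      have e2 : (n - p ^ a) % p ^ i = p ^ a * ((m - 1) % p ^ j) := by
        have : n - p ^ a = p ^ a * (m - 1) := by
          rw [hm, Nat.mul_sub, mul_one]
        rw [this, hij, pow_add, Nat.mul_mod_mul_left]
      have hmod : (m - 1) % p ^ j < p ^ j - 1 := by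
        have hle : (m - 1) % p ^ j < p ^ j := Nat.mod_lt _ (Nat.pow_pos hp.pos)
        rcases Nat.lt_or_ge ((m - 1) % p ^ j) (p ^ j - 1) with h' | h'
        · exact h'
        · exfalso
          have heq : (m - 1) % p ^ j = p ^ j - 1 := by omega
          have : p ^ j ∣ m := by
            have h2 : (m - 1) % p ^ j + 1 = p ^ j := by
              have : 1 ≤ p ^ j := Nat.pow_pos hp.pos
              omega
            have hpj1 : 1 < p ^ j := Nat.one_lt_pow (by omega) hp.one_lt
            have h4 : m = (m - 1) + 1 := by omega
            rw [Nat.dvd_iff_mod_eq_zero, h4, Nat.add_mod, Nat.mod_eq_of_lt hpj1, heq]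
            have e : p ^ j - 1 + 1 = p ^ j := by omega
            rw [e, Nat.mod_self]
          have : p ∣ m := (dvd_pow_self p (by omega : j ≠ 0)).trans this
          exact hpm this
      rw [e1, e2, hij, pow_add]
      push_neg
      calc p ^ a + p ^ a * ((m - 1) % p ^ j)
          = p ^ a * (1 + (m - 1) % p ^ j) := by ring
        _ < p ^ a * p ^ j := by
            have hpj1 : 1 < p ^ j := Nat.one_lt_pow (by omega) hp.one_lt
            have hlt2 : 1 + (m - 1) % p ^ j < p ^ j := by omega
            exact Nat.mul_lt_mul_of_pos_left hlt2 (Nat.pow_pos hp.pos)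
  omega

theorem stmt_15 (n p : ℕ) (hn : 1 < n) (hp : p.Prime) :
    (0 < padicValNat p (Finset.gcd (Finset.Ioo 0 n) (fun k => Nat.choose n k)) →
      ∃ i : ℕ, 0 < i ∧ n = p ^ i) ∧
    (∀ i : ℕ, 0 < i → n = p ^ i →
      padicValNat p (Finset.gcd (Finset.Ioo 0 n) (fun k => Nat.choose n k)) = 1) := by
  haveI : Fact p.Prime := ⟨hp⟩
  constructor
  · intro hpos
    by_contra hcon
    push_neg at hcon
    have h : ∀ i : ℕ, 0 < i → n ≠ p ^ i := fun i hi hni => hcon i hi hni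
    have hpg : p ∣ Finset.gcd (Finset.Ioo 0 n) (fun k => Nat.choose n k) :=
      dvd_of_one_le_padicValNat hpos
    have hmem : p ^ padicValNat p n ∈ Finset.Ioo 0 n := by
      rw [Finset.mem_Ioo]
      constructor
      · exact Nat.pow_pos hp.pos
      · -- need p ^ a < n; extract from not_dvd_choose's internals: redo quickly
        have hdvd : p ^ padicValNat p n ∣ n := pow_padicValNat_dvd
        rcases Nat.lt_or_ge (p ^ padicValNat p n) n with h' | h'
        · exact h'
        · exfalso
          have : p ^ padicValNat p n = n := le_antisymm (Nat.le_of_dvd (by omega) hdvd) h'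
          rcases Nat.eq_zero_or_pos (padicValNat p n) with h0 | h0
          · rw [h0, pow_zero] at this; omega
          · exact h _ h0 this.symm
    have : p ∣ Nat.choose n (p ^ padicValNat p n) :=
      hpg.trans (Finset.gcd_dvd hmem)
    exact not_dvd_choose n p hn hp h this
  · intro i hi hni
    subst hni
    set g := Finset.gcd (Finset.Ioo 0 (p ^ i)) (fun k => Nat.choose (p ^ i) k) with hg
    have h1mem : 1 ∈ Finset.Ioo 0 (p ^ i) := by
      rw [Finset.mem_Ioo]; exact ⟨one_pos, hn⟩
    have hgdvd : g ∣ Nat.choose (p ^ i) 1 := Finset.gcd_dvd h1mem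
    have hg0 : g ≠ 0 := by
      intro h0
      rw [h0] at hgdvd
      have := Nat.eq_zero_of_zero_dvd hgdvd
      rw [Nat.choose_one_right] at this
      omega
    have hpg : p ∣ g := by
      apply Finset.dvd_gcd
      intro k hk
      rw [Finset.mem_Ioo] at hk
      exact Nat.Prime.dvd_choose_pow hp (by omega) (by omega)
    have hge : 1 ≤ padicValNat p g := one_le_padicValNat_of_dvd (by omega) hpg
    have hmem2 : p ^ (i - 1) ∈ Finset.Ioo 0 (p ^ i) := by
      rw [Finset.mem_Ioo]
      exact ⟨Nat.pow_pos hp.pos, Nat.pow_lt_pow_right hp.one_lt (by omega)⟩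
    have hgdvd2 : g ∣ Nat.choose (p ^ i) (p ^ (i - 1)) := Finset.gcd_dvd hmem2
    have hC0 : Nat.choose (p ^ i) (p ^ (i - 1)) ≠ 0 :=
      (Nat.choose_pos (Nat.pow_le_pow_right hp.pos (by omega))).ne'
    have hle : padicValNat p g ≤ padicValNat p (Nat.choose (p ^ i) (p ^ (i - 1))) := by
      rw [← padicValNat_dvd_iff_le hC0]
      exact (pow_padicValNat_dvd).trans hgdvd2
    rw [val_choose_pow_pow p i hp hi] at hle
    omega
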